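/- arXiv:2501.13825 — 3 statements merged into one kernel-verified Lean document; each statement's English description precedes it below -/
import Mathlib

section
/- Let g be a continuous piecewise affine function on ℝᴺ with axis-aligned grid regions indexed by (b₁,…,b_N) ∈ {0,…,M}ᴺ, where on region b the function is a₀^b + Σₙ aₙ^b tₙ. Then for each n ≥ 1, the slope coefficient aₙ^b depends only on the index bₙ, i.e., if b and b' satisfy bₙ = bₙ' then aₙ^b = aₙ^{b'}. -/
/-- For a continuous grid piecewise affine function on ℝᴺ (regions indexed by
`b ∈ {0,…,M}ᴺ`, affine piece `a₀^b + ∑ₙ aₙ^b tₙ` on region `b`, with adjacent regions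
agreeing on their shared facet `{t : tₙ = breakpoint}`), each slope coefficient
`aₙ^b` depends only on the index `bₙ`. -/
theorem stmt_7 (N M : ℕ) (t : Fin N → ℕ → ℝ)
    (a₀ : (Fin N → Fin (M + 1)) → ℝ)
    (a : (Fin N → Fin (M + 1)) → Fin N → ℝ)
    (hcont : ∀ (b b' : Fin N → Fin (M + 1)) (n : Fin N),
      (∀ m, m ≠ n → b m = b' m) → (b' n : ℕ) = (b n : ℕ) + 1 →
      ∀ x : Fin N → ℝ, x n = t n (b n) →
        a₀ b + ∑ i, a b i * x i = a₀ b' + ∑ i, a b' i * x i) :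
    ∀ (n : Fin N) (b b' : Fin N → Fin (M + 1)), b n = b' n → a b n = a b' n := by
  intro n b b' hbn
  classical
  -- Step lemma: moving one step in a direction m ≠ n does not change aₙ
  have step : ∀ (m : Fin N), m ≠ n → ∀ (c : Fin N → Fin (M + 1)) (k : Fin (M + 1)),
      (k : ℕ) = (c m : ℕ) + 1 → a c n = a (Function.update c m k) n := by
    intro m hmn c k hk
    set c' := Function.update c m k with hc'
    have hadj : ∀ m', m' ≠ m → c m' = c' m' := by
      intro m' hm'; simp [hc', Function.update_of_ne hm']
    have hval : (c' m : ℕ) = (c m : ℕ) + 1 := by simp [hc', hk]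
    set T := t m (c m) with hT
    have e0 := hcont c c' m hadj hval
      (fun i => (if i = m then T else 0) + (if i = n then (0:ℝ) else 0)) (by simp [hT])
    have e1 := hcont c c' m hadj hval
      (fun i => (if i = m then T else 0) + (if i = n then (1:ℝ) else 0)) (by simp [hmn, hT])
    simp only [mul_add, Finset.sum_add_distrib, mul_ite, mul_zero, mul_one,
      Finset.sum_ite_eq', Finset.mem_univ, if_true] at e0 e1
    linarith
  -- moving to value 0 in direction m ≠ n
  have base : ∀ (m : Fin N), m ≠ n → ∀ (c : Fin N → Fin (M + 1)) (j : Fin (M + 1)),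
      a (Function.update c m j) n = a (Function.update c m 0) n := by
    intro m hmn c
    suffices h : ∀ i : ℕ, ∀ j : Fin (M + 1), (j : ℕ) = i →
        a (Function.update c m j) n = a (Function.update c m 0) n by
      intro j; exact h j j rfl
    intro i
    induction i with
    | zero =>
      intro j hj
      have : j = 0 := by
        apply Fin.ext; simpa using hj
      rw [this]
    | succ i ih =>
      intro j hj
      have hiM : i < M + 1 := by omega
      set j' : Fin (M + 1) := ⟨i, hiM⟩ with hj'
      have h1 : a (Function.update c m j') n
          = a (Function.update (Function.update c m j') m j) n := by
        apply step m hmn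
        simp [hj', hj]
      rw [Function.update_idem] at h1
      rw [← h1]
      exact ih j' rfl
  -- updating one coordinate m ≠ n does not change aₙ
  have upd : ∀ (m : Fin N), m ≠ n → ∀ (c : Fin N → Fin (M + 1)) (k : Fin (M + 1)),
      a (Function.update c m k) n = a c n := by
    intro m hmn c k
    have h1 := base m hmn c k
    have h2 := base m hmn c (c m)
    rw [Function.update_eq_self] at h2
    rw [h1, ← h2]
  -- mix over a finset of coordinates
  have mixlem : ∀ s : Finset (Fin N),
      a (fun m => if m ∈ s then b' m else b m) n = a b n := by
    intro s
    induction s using Finset.induction_on with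
    | empty => simp
    | @insert m s hm ih =>
      by_cases hmn : m = n
      · subst hmn
        have heq : (fun m' => if m' ∈ insert m s then b' m' else b m')
            = (fun m' => if m' ∈ s then b' m' else b m') := by
          funext m'
          by_cases h : m' = m
          · subst h; simp [← hbn]
          · simp [Finset.mem_insert, h]
        rw [heq]; exact ih
      · have heq : (fun m' => if m' ∈ insert m s then b' m' else b m')
            = Function.update (fun m' => if m' ∈ s then b' m' else b m') m (b' m) := by
          funext m'
          by_cases h : m' = m
          · subst h; simp [hm]
          · simp [Finset.mem_insert, h, Function.update_of_ne h]
        rw [heq, upd m hmn]; exact ih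
  have := mixlem Finset.univ
  simp only [Finset.mem_univ, if_true] at this
  exact this.symm
end

section
/- With the setup of the grid piecewise affine function and writing aₙ^{bₙ} for the slope in direction n on segment bₙ, continuity implies a₀^{b₁…b_N} = a₀^{0…0} + Σ_{k=1}^{N} Σ_{b'=0}^{b_k - 1} t_k^{b'} (a_k^{b'} - a_k^{b'+1}). -/
/-- For a continuous grid piecewise affine function on ℝᴺ whose slopes `aₙ^{bₙ}`
depend only on the coordinate-wise segment index, continuity across facets implies
`a₀^{b} = a₀^{0…0} + ∑ₖ ∑_{b'=0}^{b_k-1} t_k^{b'} (a_k^{b'} - a_k^{b'+1})`. -/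
theorem stmt_8 (N M : ℕ) (t : Fin N → ℕ → ℝ)
    (a₀ : (Fin N → Fin (M + 1)) → ℝ)
    (a : Fin N → ℕ → ℝ)
    (hcont : ∀ (b b' : Fin N → Fin (M + 1)) (n : Fin N),
      (∀ m, m ≠ n → b m = b' m) → (b' n : ℕ) = (b n : ℕ) + 1 →
      ∀ x : Fin N → ℝ, x n = t n (b n) →
        a₀ b + ∑ i, a i (b i) * x i = a₀ b' + ∑ i, a i (b' i) * x i) :
    ∀ b : Fin N → Fin (M + 1),
      a₀ b = a₀ (fun _ => 0) +
        ∑ k, ∑ j ∈ Finset.range (b k), t k j * (a k j - a k (j + 1)) := by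
  have step : ∀ (b b' : Fin N → Fin (M + 1)) (n : Fin N),
      (∀ m, m ≠ n → b m = b' m) → (b' n : ℕ) = (b n : ℕ) + 1 →
      a₀ b' = a₀ b + t n (b n) * (a n (b n) - a n ((b n : ℕ) + 1)) := by
    intro b b' n hm hn
    have h := hcont b b' n hm hn (fun i => if i = n then t n (b n) else 0) (by simp)
    have hs : ∀ (c : Fin N → Fin (M + 1)),
        ∑ i, a i (c i) * (if i = n then t n (b n) else 0)
          = a n (c n) * t n (b n) := by
      intro c
      rw [Finset.sum_eq_single n]
      · simp
      · intro m _ hmn; simp [hmn]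
      · simp
    rw [hs b, hs b', hn] at h
    linarith
  suffices H : ∀ s (b : Fin N → Fin (M + 1)), (∑ k, (b k : ℕ)) = s →
      a₀ b = a₀ (fun _ => 0) +
        ∑ k, ∑ j ∈ Finset.range (b k), t k j * (a k j - a k (j + 1)) by
    intro b; exact H _ b rfl
  intro s
  induction s using Nat.strong_induction_on with
  | _ s ih =>
    intro b hb
    by_cases h0 : ∀ k, b k = 0
    · have hb0 : b = fun _ => 0 := funext h0
      rw [hb0]; simp
    · push_neg at h0
      obtain ⟨n, hn⟩ := h0
      have hpos : 0 < (b n : ℕ) := by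
        apply Nat.pos_of_ne_zero
        intro h
        exact hn (Fin.ext h)
      have hlt : (b n : ℕ) - 1 < M + 1 := by
        have := (b n).isLt; omega
      set c : Fin N → Fin (M + 1) := Function.update b n ⟨(b n : ℕ) - 1, hlt⟩ with hc
      have hcn : (c n : ℕ) = (b n : ℕ) - 1 := by simp [hc]
      have hcm : ∀ m, m ≠ n → c m = b m := by
        intro m hm; simp [hc, Function.update_of_ne hm]
      have hstep := step c b n hcm (by rw [hcn]; omega)
      have hsum : ∑ k, (c k : ℕ) = s - 1 := by
        rw [← hb]
        rw [Finset.sum_eq_sum_sdiff_singleton_add (Finset.mem_univ n) (fun k => (c k : ℕ)),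
            Finset.sum_eq_sum_sdiff_singleton_add (Finset.mem_univ n) (fun k => (b k : ℕ))]
        have : ∑ k ∈ Finset.univ \ {n}, (c k : ℕ) = ∑ k ∈ Finset.univ \ {n}, (b k : ℕ) := by
          apply Finset.sum_congr rfl
          intro m hm
          rw [hcm m (by simpa using (Finset.mem_sdiff.mp hm).2)]
        rw [this, hcn]
        have hle : (b n : ℕ) ≤ ∑ k ∈ Finset.univ \ {n}, (b k : ℕ) + (b n : ℕ) := by omega
        omega
      have hs1 : s - 1 < s := by
        have : 0 < s := by rw [← hb]; exact Finset.sum_pos' (fun _ _ => Nat.zero_le _) ⟨n, Finset.mem_univ n, hpos⟩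
        omega
      have hIH := ih (s - 1) hs1 c hsum
      rw [hstep, hIH]
      have hsplit : ∑ k, ∑ j ∈ Finset.range (b k), t k j * (a k j - a k (j + 1))
          = (∑ k, ∑ j ∈ Finset.range (c k), t k j * (a k j - a k (j + 1)))
            + t n ((b n : ℕ) - 1) * (a n ((b n : ℕ) - 1) - a n ((b n : ℕ) - 1 + 1)) := by
        rw [Finset.sum_eq_sum_sdiff_singleton_add (Finset.mem_univ n),
            Finset.sum_eq_sum_sdiff_singleton_add (Finset.mem_univ n)
              (fun k => ∑ j ∈ Finset.range (c k), t k j * (a k j - a k (j + 1)))]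
        have he : ∑ k ∈ Finset.univ \ {n}, ∑ j ∈ Finset.range (c k), t k j * (a k j - a k (j + 1))
            = ∑ k ∈ Finset.univ \ {n}, ∑ j ∈ Finset.range (b k), t k j * (a k j - a k (j + 1)) := by
          apply Finset.sum_congr rfl
          intro m hm
          rw [hcm m (by simpa using (Finset.mem_sdiff.mp hm).2)]
        rw [he, hcn]
        have hbn : (b n : ℕ) = ((b n : ℕ) - 1) + 1 := by omega
        rw [hbn, Finset.sum_range_succ]
        simp only [Nat.add_sub_cancel]
        ring
      rw [hsplit, hcn]
      have : (b n : ℕ) - 1 + 1 = (b n : ℕ) := by omega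
      rw [this]
      ring
end

section
/- A continuous grid piecewise affine function on ℝᴺ with M breakpoints per coordinate (hence (M+1)ᴺ regions) is determined by (N+1)(M+1) parameters: the slopes aₙ^{bₙ} for n = 1,…,N and bₙ = 0,…,M, together with the single intercept a₀^{0…0}. -/
/-- A continuous grid piecewise affine function on ℝᴺ with `M` breakpoints per
coordinate is determined by the `(N+1)(M+1)` parameters: the slopes `aₙ^{bₙ}`
(`n = 1,…,N`, `bₙ = 0,…,M`) and the single intercept `a₀^{0…0}`. Two such continuous
functions with the same slope parameters and the same base intercept coincide on
every region. -/
theorem stmt_9 (N M : ℕ) (t : Fin N → ℕ → ℝ)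
    (a₀ a₀' : (Fin N → Fin (M + 1)) → ℝ)
    (a a' : (Fin N → Fin (M + 1)) → Fin N → ℝ)
    (hcont : ∀ (b b' : Fin N → Fin (M + 1)) (n : Fin N),
      (∀ m, m ≠ n → b m = b' m) → (b' n : ℕ) = (b n : ℕ) + 1 →
      ∀ x : Fin N → ℝ, x n = t n (b n) →
        a₀ b + ∑ i, a b i * x i = a₀ b' + ∑ i, a b' i * x i)
    (hcont' : ∀ (b b' : Fin N → Fin (M + 1)) (n : Fin N),
      (∀ m, m ≠ n → b m = b' m) → (b' n : ℕ) = (b n : ℕ) + 1 →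
      ∀ x : Fin N → ℝ, x n = t n (b n) →
        a₀' b + ∑ i, a' b i * x i = a₀' b' + ∑ i, a' b' i * x i)
    -- the slope parameters `aₙ^{bₙ}` agree (slopes depend only on `bₙ`):
    (hslope : ∀ (n : Fin N) (b b' : Fin N → Fin (M + 1)),
      b n = b' n → a b n = a' b' n)
    -- the base intercepts `a₀^{0…0}` agree:
    (hbase : a₀ (fun _ => 0) = a₀' (fun _ => 0)) :
    ∀ (b : Fin N → Fin (M + 1)) (x : Fin N → ℝ),
      a₀ b + ∑ i, a b i * x i = a₀' b + ∑ i, a' b i * x i := by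
  have hA : ∀ b i, a b i = a' b i := fun b i => hslope i b b rfl
  -- one-step equality of intercept differences across a facet
  have step : ∀ (b b' : Fin N → Fin (M + 1)) (n : Fin N),
      (∀ m, m ≠ n → b m = b' m) → (b' n : ℕ) = (b n : ℕ) + 1 →
      a₀ b - a₀' b = a₀ b' - a₀' b' := by
    intro b b' n hm hn
    set T := t n (b n) with hT
    set x : Fin N → ℝ := fun i => if i = n then T else 0 with hx
    have hxn : x n = T := by simp [hx]
    have hsum : ∀ (c : (Fin N → Fin (M + 1)) → Fin N → ℝ) (b₁ : Fin N → Fin (M + 1)),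
        ∑ i, c b₁ i * x i = c b₁ n * T := by
      intro c b₁
      rw [Finset.sum_eq_single n]
      · simp [hx]
      · intro i _ hi; simp [hx, hi]
      · intro h; exact absurd (Finset.mem_univ n) h
    have h1 := hcont b b' n hm hn x hxn
    have h2 := hcont' b b' n hm hn x hxn
    rw [hsum a b, hsum a b', hsum a' b, hsum a' b'] at *
    have e1 : a b n = a' b n := hA b n
    have e2 : a b' n = a' b' n := hA b' n
    rw [e1, e2] at h1
    linarith
  have key : ∀ (k : ℕ) (b : Fin N → Fin (M + 1)), (∑ n, (b n : ℕ)) = k → a₀ b = a₀' b := by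
    intro k
    induction k with
    | zero =>
      intro b hb
      have hb0 : b = fun _ => 0 := by
        funext n
        have := (Finset.sum_eq_zero_iff.mp hb) n (Finset.mem_univ n)
        exact Fin.ext (by simpa using this)
      rw [hb0]; exact hbase
    | succ k ih =>
      intro b hb
      have hpos : ∃ n, (b n : ℕ) ≠ 0 := by
        by_contra h
        push_neg at h
        have : (∑ n, (b n : ℕ)) = 0 := Finset.sum_eq_zero fun n _ => h n
        omega
      obtain ⟨n, hn⟩ := hpos
      have hlt : (b n : ℕ) - 1 < M + 1 := lt_of_le_of_lt (Nat.sub_le _ _) (b n).isLt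
      set bp : Fin N → Fin (M + 1) := Function.update b n ⟨(b n : ℕ) - 1, hlt⟩ with hbp
      have hmm : ∀ m, m ≠ n → bp m = b m := fun m hm => Function.update_of_ne hm _ _
      have hbpn : (b n : ℕ) = (bp n : ℕ) + 1 := by
        simp [hbp, Function.update_self]
        omega
      have hsumbp : (∑ m, (bp m : ℕ)) = k := by
        have hb' : (∑ m, (b m : ℕ)) = (b n : ℕ) + ∑ m ∈ Finset.univ.erase n, (b m : ℕ) :=
          (Finset.add_sum_erase _ _ (Finset.mem_univ n)).symm
        have hbp' : (∑ m, (bp m : ℕ)) = (bp n : ℕ) + ∑ m ∈ Finset.univ.erase n, (bp m : ℕ) :=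
          (Finset.add_sum_erase _ _ (Finset.mem_univ n)).symm
        have hrest : ∑ m ∈ Finset.univ.erase n, (bp m : ℕ)
            = ∑ m ∈ Finset.univ.erase n, (b m : ℕ) :=
          Finset.sum_congr rfl fun m hm => by
            rw [hmm m (Finset.ne_of_mem_erase hm)]
        rw [hbp', hrest]
        omega
      have hstep := step bp b n (fun m hm => hmm m hm) (by omega)
      have := ih bp hsumbp
      linarith
  intro b x
  have h1 : a₀ b = a₀' b := key (∑ n, (b n : ℕ)) b rfl
  have h2 : ∀ i, a b i = a' b i := hA b
  rw [h1]
  exact congrArg _ (Finset.sum_congr rfl fun i _ => by rw [h2 i])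
end
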